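/- Let h*(z) = h*_0 + h*_1 z + ... + h*_d z^d be a polynomial of degree s ≤ d, and let l = d+1-s. Then there exist unique polynomials a(z) of degree ≤ d and b(z) of degree ≤ s-1 satisfying the symmetry conditions a(z) = z^d·a(1/z) and b(z) = z^{s-1}·b(1/z) such that (1 + z + ... + z^{l-1})·h*(z) = a(z) + z^l·b(z). Moreover their coefficients are given by a_j = h*_0 + h*_1 + ... + h*_j − h*_d − h*_{d-1} − ... − h*_{d-j+1} and b_j = −h*_0 − h*_1 − ... − h*_j + h*_s + h*_{s-1} + ... + h*_{s-j}. -/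

import Mathlib

open Polynomial Finset

private lemma sum_shift (F : ℕ → ℤ) (l k : ℕ) :
    ∑ i ∈ Finset.range l, (if i ≤ k then F (k - i) else 0) =
      (∑ j ∈ Finset.range (k+1), F j) - ∑ j ∈ Finset.range (k+1-l), F j := by
  induction l with
  | zero => simp
  | succ l ih =>
    rw [Finset.sum_range_succ, ih]
    by_cases hl : l ≤ k
    · have h1 : k + 1 - l = (k - l) + 1 := by omega
      have h2 : k + 1 - (l + 1) = k - l := by omega
      rw [if_pos hl, h1, h2]
      simp only [Finset.sum_range_succ]
      ring
    · have h2 : k + 1 - l = k + 1 - (l+1) := by omega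
      rw [if_neg hl, h2]; ring

private lemma coeff_sumC (f : ℕ → ℤ) (n k : ℕ) :
    (∑ i ∈ Finset.range n, Polynomial.C (f i) * Polynomial.X ^ i).coeff k =
      if k < n then f k else 0 := by
  rw [Polynomial.finset_sum_coeff]
  simp [Polynomial.coeff_C_mul, Polynomial.coeff_X_pow, Finset.sum_ite_eq]

/-- Stapledon decomposition: algebraic existence, uniqueness, and coefficient formulas. -/
theorem stmt0 (d s : ℕ) (hsd : s ≤ d) (h : ℕ → ℤ) (hhs : h s ≠ 0)
    (htop : ∀ j, s < j → h j = 0) :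
    ∃! ab : Polynomial ℤ × Polynomial ℤ,
      (∀ j, d < j → ab.1.coeff j = 0) ∧
      (∀ j, s - 1 < j → ab.2.coeff j = 0) ∧
      (∀ j ≤ d, ab.1.coeff j = ab.1.coeff (d - j)) ∧
      (∀ j ≤ s - 1, ab.2.coeff j = ab.2.coeff (s - 1 - j)) ∧
      (∑ i ∈ Finset.range (d + 1 - s), (Polynomial.X : Polynomial ℤ) ^ i) *
          (∑ j ∈ Finset.range (d + 1), Polynomial.C (h j) * Polynomial.X ^ j) =
        ab.1 + Polynomial.X ^ (d + 1 - s) * ab.2 ∧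
      (∀ j ≤ d, ab.1.coeff j =
        (∑ i ∈ Finset.range (j + 1), h i) - ∑ i ∈ Finset.range j, h (d - i)) ∧
      (∀ j ≤ s - 1, ab.2.coeff j =
        -(∑ i ∈ Finset.range (j + 1), h i) + ∑ i ∈ Finset.range (j + 1), h (s - i)) := by
  classical
  set l := d + 1 - s with hl
  set T : ℕ → ℤ := fun m => ∑ i ∈ Finset.range m, h i with hT
  have hl1 : 1 ≤ l := by omega
  have hT0 : T 0 = 0 := by simp [hT]
  have hTconst : ∀ m, s + 1 ≤ m → T m = T (s + 1) := by
    intro m hm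
    refine (Finset.sum_subset (Finset.range_subset_range.mpr hm) ?_).symm
    intro x hx hx2
    simp only [Finset.mem_range] at hx hx2
    exact htop x (by omega)
  set a : Polynomial ℤ :=
    ∑ j ∈ Finset.range (d+1),
      Polynomial.C (T (j+1) + T (d+1-j) - T (d+1)) * Polynomial.X ^ j with ha
  set b : Polynomial ℤ :=
    ∑ j ∈ Finset.range s,
      Polynomial.C (T (s+1) - T (j+1) - T (s-j)) * Polynomial.X ^ j with hb
  have hac : ∀ k, a.coeff k =
      if k < d + 1 then T (k+1) + T (d+1-k) - T (d+1) else 0 := by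
    intro k; rw [ha]; exact coeff_sumC _ _ _
  have hbc : ∀ k, b.coeff k =
      if k < s then T (s+1) - T (k+1) - T (s-k) else 0 := by
    intro k; rw [hb]; exact coeff_sumC _ _ _
  -- fact 1
  have f1 : ∀ j, d < j → a.coeff j = 0 := by
    intro j hj; rw [hac, if_neg (by omega)]
  have f2 : ∀ j, s - 1 < j → b.coeff j = 0 := by
    intro j hj; rw [hbc, if_neg (by omega)]
  have f3 : ∀ j ≤ d, a.coeff j = a.coeff (d - j) := by
    intro j hj
    rw [hac, hac, if_pos (by omega), if_pos (by omega)]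
    have e1 : d + 1 - (d - j) = j + 1 := by omega
    have e2 : d - j + 1 = d + 1 - j := by omega
    rw [e1, e2]; ring
  have f4 : ∀ j ≤ s - 1, b.coeff j = b.coeff (s - 1 - j) := by
    intro j hj
    rcases Nat.eq_zero_or_pos s with hs | hs
    · have : j = 0 := by omega
      subst this
      simp [hs]
    · rw [hbc, hbc, if_pos (by omega), if_pos (by omega)]
      have e1 : s - (s - 1 - j) = j + 1 := by omega
      have e2 : s - 1 - j + 1 = s - j := by omega
      rw [e1, e2]; ring
  -- fact 6
  have f6 : ∀ j ≤ d, a.coeff j =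
      (∑ i ∈ Finset.range (j + 1), h i) - ∑ i ∈ Finset.range j, h (d - i) := by
    intro j hj
    have e : ∑ i ∈ Finset.range j, h (d - i) =
        ∑ i ∈ Finset.range j, (if i ≤ d then h (d - i) else 0) := by
      refine Finset.sum_congr rfl fun i hi => ?_
      rw [if_pos]
      simp only [Finset.mem_range] at hi; omega
    rw [hac, if_pos (by omega), e, sum_shift h j d]
    have e2 : T (j+1) = ∑ i ∈ Finset.range (j + 1), h i := rfl
    have e3 : T (d+1) = ∑ i ∈ Finset.range (d + 1), h i := rfl
    have e4 : T (d+1-j) = ∑ i ∈ Finset.range (d + 1 - j), h i := rfl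
    rw [← e2, ← e3, ← e4]; ring
  have f7 : ∀ j ≤ s - 1, b.coeff j =
      -(∑ i ∈ Finset.range (j + 1), h i) + ∑ i ∈ Finset.range (j + 1), h (s - i) := by
    intro j hj
    have e : ∑ i ∈ Finset.range (j+1), h (s - i) =
        ∑ i ∈ Finset.range (j+1), (if i ≤ s then h (s - i) else 0) := by
      refine Finset.sum_congr rfl fun i hi => ?_
      rw [if_pos]
      simp only [Finset.mem_range] at hi; omega
    have e5 : s + 1 - (j + 1) = s - j := by omega
    rw [hbc, e, sum_shift h (j+1) s, e5]
    have e2 : T (j+1) = ∑ i ∈ Finset.range (j + 1), h i := rfl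
    have e3 : T (s+1) = ∑ i ∈ Finset.range (s + 1), h i := rfl
    have e4 : T (s-j) = ∑ i ∈ Finset.range (s - j), h i := rfl
    by_cases hjs : j < s
    · rw [if_pos hjs, ← e2, ← e3, ← e4]; ring
    · have hs0 : s = 0 := by omega
      have hj0 : j = 0 := by omega
      subst hs0; subst hj0
      rw [if_neg hjs]
      simp
  -- fact 5 : product identity
  have f5 : (∑ i ∈ Finset.range l, (Polynomial.X : Polynomial ℤ) ^ i) *
          (∑ j ∈ Finset.range (d + 1), Polynomial.C (h j) * Polynomial.X ^ j) =
        a + Polynomial.X ^ l * b := by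
    set H : Polynomial ℤ := ∑ j ∈ Finset.range (d + 1), Polynomial.C (h j) * Polynomial.X ^ j
      with hH
    set F : ℕ → ℤ := fun m => if m < d + 1 then h m else 0 with hF
    have hTf : ∀ m, (∑ j ∈ Finset.range m, F j) = T (min m (d+1)) := by
      intro m
      by_cases hm : m ≤ d + 1
      · rw [min_eq_left hm]
        refine Finset.sum_congr rfl fun i hi => ?_
        simp only [Finset.mem_range] at hi
        rw [hF]; simp only []
        rw [if_pos (by omega)]
      · rw [min_eq_right (by omega)]
        rw [← Finset.sum_subset (Finset.range_subset_range.mpr (by omega : d + 1 ≤ m))]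
        · refine Finset.sum_congr rfl fun i hi => ?_
          simp only [Finset.mem_range] at hi
          rw [hF]; simp only []
          rw [if_pos (by omega)]
        · intro x hx hx2
          simp only [Finset.mem_range] at hx hx2
          rw [hF]; simp only []
          rw [if_neg (by omega)]
    have hmul : (∑ i ∈ Finset.range l, (Polynomial.X : Polynomial ℤ) ^ i) * H =
        ∑ i ∈ Finset.range l, H * Polynomial.X ^ i := by
      rw [Finset.sum_mul]
      exact Finset.sum_congr rfl fun i _ => mul_comm _ _
    ext k
    rw [hmul, Polynomial.finset_sum_coeff]
    have hHF : ∀ m, H.coeff m = F m := by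
      intro m; rw [hH]; exact coeff_sumC _ _ _
    have e1 : ∀ i, (H * Polynomial.X ^ i).coeff k = if i ≤ k then F (k - i) else 0 := by
      intro i
      rw [Polynomial.coeff_mul_X_pow']
      split_ifs with hik
      · exact hHF _
      · rfl
    rw [Finset.sum_congr rfl fun i _ => e1 i, sum_shift F l k, hTf, hTf]
    rw [Polynomial.coeff_add, hac]
    have e2 : (Polynomial.X ^ l * b).coeff k = if l ≤ k then b.coeff (k - l) else 0 := by
      rw [Polynomial.X_pow_mul, Polynomial.coeff_mul_X_pow']
    rw [e2]
    rcases lt_or_ge k (d+1) with hk | hk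
    · rcases lt_or_ge k l with hkl | hkl
      · rw [if_pos hk, if_neg (by omega)]
        have e3 : min (k+1) (d+1) = k + 1 := by omega
        have e4 : k + 1 - l = 0 := by omega
        have e5 : min 0 (d+1) = 0 := by omega
        rw [e3, e4, e5, hT0]
        have c1 := hTconst (d+1-k) (by omega)
        have c2 := hTconst (d+1) (by omega)
        linarith
      · rw [if_pos hk, if_pos hkl, hbc, if_pos (by omega)]
        have e3 : min (k+1) (d+1) = k + 1 := by omega
        have e4 : min (k+1-l) (d+1) = k + 1 - l := by omega
        have e5 : s - (k - l) = d + 1 - k := by omega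
        have e6 : k - l + 1 = k + 1 - l := by omega
        rw [e3, e4, e5, e6]
        have c2 := hTconst (d+1) (by omega)
        linarith
    · rw [if_neg (by omega)]
      have e3 : min (k+1) (d+1) = d + 1 := by omega
      have e4 : T (min (k+1-l) (d+1)) = T (s+1) := hTconst _ (by omega)
      have c2 := hTconst (d+1) (by omega)
      have e5 : (if l ≤ k then b.coeff (k - l) else 0) = 0 := by
        split_ifs with hlk
        · rw [hbc, if_neg (by omega)]
        · rfl
      rw [e3, e4, e5]
      linarith
  refine ⟨(a, b), ⟨f1, f2, f3, f4, f5, f6, f7⟩, ?_⟩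
  rintro ⟨a', b'⟩ ⟨g1, g2, -, -, -, g6, g7⟩
  have ea : a' = a := by
    ext k
    by_cases hk : k ≤ d
    · rw [g6 k hk, f6 k hk]
    · rw [g1 k (by omega), f1 k (by omega)]
  have eb : b' = b := by
    ext k
    by_cases hk : k ≤ s - 1
    · rw [g7 k hk, f7 k hk]
    · rw [g2 k (by omega), f2 k (by omega)]
  rw [Prod.mk.injEq]
  exact ⟨ea, eb⟩
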